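/- Let R be a finite reduced crystallographic root system spanning a finite-dimensional real vector space V, with base Π and Weyl group W, and let γ ∈ V satisfy ⟨γ, α∨⟩ ∈ ℤ_{>0} for every α ∈ Π. Let w ∈ W with w ≠ 1, and suppose w is not of the form ∏_{α ∈ K} s_α for any nonempty subset K ⊆ Π with ⟨α, β∨⟩ = 0 for all distinct α, β ∈ K. Writing γ − wγ = Σ_{α ∈ Π} c_α(w)·α, there exists β ∈ Π with c_β(w) > ⟨γ, β∨⟩. -/

import Mathlib

set_option linter.unusedSectionVars false
set_option linter.unusedVariables false
set_option maxHeartbeats 1000000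

/-- A root system (as in the older Mathlib): a root pairing whose roots span the ambient module. -/
structure RootSystem (ι R M N : Type*) [CommRing R] [AddCommGroup M] [Module R M]
    [AddCommGroup N] [Module R N] extends RootPairing ι R M N where
  span_eq_top : Submodule.span R (Set.range root) = ⊤

open RootPairing Function

/-- A base of a root system: a linearly independent subset of the roots such that every root
is either a nonnegative or a nonpositive integer linear combination of its elements. -/
def RootSystem.IsBaseSet {ι V N : Type*} [AddCommGroup V] [Module ℝ V]
    [AddCommGroup N] [Module ℝ N] (P : RootSystem ι ℝ V N) (b : Finset ι) : Prop :=
  (LinearIndependent ℝ fun j : b => P.root j) ∧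
    ∀ i : ι, ∃ c : ι → ℤ, ((∀ j ∈ b, 0 ≤ c j) ∨ (∀ j ∈ b, c j ≤ 0)) ∧
      P.root i = ∑ j ∈ b, c j • P.root j

lemma RootPairing.rootForm_root_self_pos {ι V N : Type*} [Fintype ι] [AddCommGroup V]
    [Module ℝ V] [AddCommGroup N] [Module ℝ N] (P : RootPairing ι ℝ V N) (j : ι) :
    0 < P.RootForm (P.root j) (P.root j) :=
  P.rootForm_pos_of_ne_zero (Submodule.subset_span (Set.mem_range_self j)) (P.ne_zero j)

namespace ExistsCoeffAux

variable {ι V N : Type*} [Fintype ι] [DecidableEq ι] [AddCommGroup V] [Module ℝ V]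
    [AddCommGroup N] [Module ℝ N] (P : RootSystem ι ℝ V N) (b : Finset ι)

/-- positive root (w.r.t. the base `b`) -/
def PosR (m : ι) : Prop :=
  ∃ c : ι → ℤ, (∀ j ∈ b, 0 ≤ c j) ∧ P.root m = ∑ j ∈ b, c j • P.root j

/-- negative root (w.r.t. the base `b`) -/
def NegR (m : ι) : Prop :=
  ∃ c : ι → ℤ, (∀ j ∈ b, c j ≤ 0) ∧ P.root m = ∑ j ∈ b, c j • P.root j

variable {P b}

lemma int_sum_cast (c : ι → ℤ) :
    ∑ j ∈ b, c j • P.root j = ∑ j ∈ b, ((c j : ℝ)) • P.root j :=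
  Finset.sum_congr rfl fun j _ => (Int.cast_smul_eq_zsmul ℝ (c j) _).symm

lemma coeff_unique (hli : LinearIndependent ℝ fun j : b => P.root j) {d e : ι → ℝ}
    (h : ∑ j ∈ b, d j • P.root j = ∑ j ∈ b, e j • P.root j) : ∀ j ∈ b, d j = e j := by
  have h0 : ∑ j : b, (d j - e j) • P.root (j : ι) = 0 := by
    rw [Finset.sum_coe_sort b (fun j => (d j - e j) • P.root j)]
    simp only [sub_smul, Finset.sum_sub_distrib, h, sub_self]
  intro j hj
  have := Fintype.linearIndependent_iff.mp hli (fun j : b => d j - e j) h0 ⟨j, hj⟩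
  linarith [this]

lemma posR_or_negR (hb : P.IsBaseSet b) (m : ι) : PosR P b m ∨ NegR P b m := by
  obtain ⟨c, hc, hsum⟩ := hb.2 m
  rcases hc with h | h
  · exact Or.inl ⟨c, h, hsum⟩
  · exact Or.inr ⟨c, h, hsum⟩

lemma not_posR_and_negR (hb : P.IsBaseSet b) {m : ι} (h1 : PosR P b m) (h2 : NegR P b m) :
    False := by
  obtain ⟨c, hc, hcs⟩ := h1
  obtain ⟨e, he, hes⟩ := h2
  have huniq : ∀ j ∈ b, ((c j : ℝ)) = ((e j : ℝ)) :=
    coeff_unique hb.1 (by rw [← int_sum_cast, ← int_sum_cast, ← hcs, ← hes])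
  have hzero : ∀ j ∈ b, (c j : ℝ) = 0 := by
    intro j hj
    have h1 := hc j hj
    have h2 := he j hj
    have := huniq j hj
    have h1' : (0:ℝ) ≤ c j := by exact_mod_cast h1
    have h2' : (e j : ℝ) ≤ 0 := by exact_mod_cast h2
    linarith
  have : P.root m = 0 := by
    rw [hcs, int_sum_cast]
    exact Finset.sum_eq_zero fun j hj => by rw [hzero j hj, zero_smul]
  exact P.ne_zero m this

lemma posR_base {i : ι} (hi : i ∈ b) : PosR P b i := by
  refine ⟨fun j => if j = i then 1 else 0, fun j _ => by positivity, ?_⟩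
  rw [show ∑ j ∈ b, (if j = i then (1:ℤ) else 0) • P.root j
      = ∑ j ∈ b, (if j = i then (1:ℤ) • P.root j else 0) from
    Finset.sum_congr rfl fun j _ => by split <;> simp]
  rw [Finset.sum_ite_eq' b i (fun j => (1:ℤ) • P.root j)]
  simp [hi]

lemma negR_of_posR (hb : P.IsBaseSet b) {m : ι} (h : PosR P b m) :
    NegR P b (P.reflectionPerm m m) := by
  obtain ⟨c, hc, hcs⟩ := h
  refine ⟨fun j => -c j, fun j hj => by simpa using hc j hj, ?_⟩
  have : P.root (P.reflectionPerm m m) = -P.root m := by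
    rw [P.root_reflectionPerm m m, P.reflection_apply_self]
  rw [this, hcs, ← Finset.sum_neg_distrib]
  exact Finset.sum_congr rfl fun j _ => by rw [neg_smul]

lemma posR_of_negR (hb : P.IsBaseSet b) {m : ι} (h : NegR P b m) :
    PosR P b (P.reflectionPerm m m) := by
  obtain ⟨c, hc, hcs⟩ := h
  refine ⟨fun j => -c j, fun j hj => by simpa using hc j hj, ?_⟩
  have : P.root (P.reflectionPerm m m) = -P.root m := by
    rw [P.root_reflectionPerm m m, P.reflection_apply_self]
  rw [this, hcs, ← Finset.sum_neg_distrib]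
  exact Finset.sum_congr rfl fun j _ => by rw [neg_smul]

/-- Key positivity lemma: a simple reflection sends positive roots other than itself
to positive roots. -/
lemma posR_reflection (hb : P.IsBaseSet b) (hred : P.IsReduced)
    {i m : ι} (hi : i ∈ b) (hm : PosR P b m) (hne : m ≠ i) :
    PosR P b (P.reflectionPerm i m) := by
  obtain ⟨c, hc, hcs⟩ := hm
  set p : ℝ := P.pairing m i with hp
  have hrefl : P.root (P.reflectionPerm i m)
      = ∑ j ∈ b, ((c j : ℝ) - if j = i then p else 0) • P.root j := by
    rw [P.root_reflectionPerm i m, P.reflection_apply_root]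
    simp only [sub_smul]
    rw [Finset.sum_sub_distrib]
    congr 1
    · rw [hcs, int_sum_cast]
    · rw [show ∑ j ∈ b, (if j = i then p else 0) • P.root j
          = ∑ j ∈ b, (if j = i then p • P.root j else 0) from
        Finset.sum_congr rfl fun j _ => by split <;> simp]
      rw [Finset.sum_ite_eq' b i (fun j => p • P.root j)]
      simp [hi, hp]
  rcases posR_or_negR hb (P.reflectionPerm i m) with h | h
  · exact h
  · exfalso
    obtain ⟨e, he, hes⟩ := h
    have huniq : ∀ j ∈ b, ((e j : ℝ)) = (c j : ℝ) - if j = i then p else 0 :=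
      coeff_unique hb.1 (by rw [← int_sum_cast, ← hes, hrefl])
    -- all coefficients c j for j ≠ i vanish
    have hcz : ∀ j ∈ b, j ≠ i → c j = 0 := by
      intro j hj hji
      have h1 := huniq j hj
      rw [if_neg hji] at h1
      have h2 := hc j hj
      have h3 := he j hj
      have : (e j : ℝ) = (c j : ℝ) := by linarith
      have hej : e j = c j := by exact_mod_cast this
      omega
    have hroot : P.root m = (c i : ℝ) • P.root i := by
      rw [hcs, int_sum_cast, Finset.sum_eq_single_of_mem i hi]
      intro j hj hji
      rw [show c j = 0 from hcz j hj hji]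
      simp
    have hdep : ¬ LinearIndependent ℝ ![P.root m, P.root i] := by
      rw [LinearIndependent.pair_iff]
      push_neg
      exact ⟨1, -(c i : ℝ), by rw [one_smul, neg_smul, hroot]; abel, by norm_num⟩
    rcases RootPairing.IsReduced.eq_or_eq_neg (self := hred) m i hdep with h1 | h1
    · exact hne (P.root.injective h1)
    · have hci : (0:ℝ) ≤ (c i : ℝ) := by exact_mod_cast hc i hi
      have : ((c i : ℝ) + 1) • P.root i = 0 := by
        rw [add_smul, one_smul, ← hroot, h1]; abel
      rcases smul_eq_zero.mp this with h2 | h2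
      · linarith
      · exact P.ne_zero i h2

variable (P) in
/-- product of the reflections along a word -/
def prodS (L : List ι) : V ≃ₗ[ℝ] V := (L.map fun i => P.reflection i).prod

@[simp] lemma prodS_nil : prodS P ([] : List ι) = 1 := rfl

@[simp] lemma prodS_cons (i : ι) (L : List ι) :
    prodS P (i :: L) = P.reflection i * prodS P L := by
  simp [prodS]

lemma prodS_append (L1 L2 : List ι) :
    prodS P (L1 ++ L2) = prodS P L1 * prodS P L2 := by
  simp [prodS]

lemma prodS_reverse (L : List ι) : prodS P L.reverse = (prodS P L)⁻¹ := by
  induction L with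
  | nil => simp
  | cons i L ih =>
      rw [List.reverse_cons, prodS_append, prodS_cons, ih]
      simp [prodS, mul_inv_rev]

lemma mem_closure_iff_prodS {w : V ≃ₗ[ℝ] V} :
    w ∈ Subgroup.closure {x : V ≃ₗ[ℝ] V | ∃ i ∈ b, x = P.reflection i} ↔
      ∃ L : List ι, (∀ i ∈ L, i ∈ b) ∧ w = prodS P L := by
  constructor
  · intro hw
    induction hw using Subgroup.closure_induction with
    | mem x hx => obtain ⟨i, hi, rfl⟩ := hx; exact ⟨[i], by simpa using hi, by simp [prodS]⟩
    | one => exact ⟨[], by simp, rfl⟩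
    | mul x y hx hy ihx ihy =>
        obtain ⟨L1, h1, rfl⟩ := ihx
        obtain ⟨L2, h2, rfl⟩ := ihy
        refine ⟨L1 ++ L2, fun i hi => ?_, (prodS_append L1 L2).symm⟩
        rcases List.mem_append.mp hi with h | h
        exacts [h1 i h, h2 i h]
    | inv x hx ihx =>
        obtain ⟨L, h1, rfl⟩ := ihx
        exact ⟨L.reverse, fun i hi => h1 i (List.mem_reverse.mp hi), (prodS_reverse L).symm⟩
  · rintro ⟨L, hL, rfl⟩
    induction L with
    | nil => exact Subgroup.one_mem _
    | cons i L ih =>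
        rw [prodS_cons]
        exact Subgroup.mul_mem _
          (Subgroup.subset_closure ⟨i, hL i (by simp), rfl⟩)
          (ih (fun j hj => hL j (by simp [hj])))

lemma prodS_root (L : List ι) (α : ι) : ∃ m, prodS P L (P.root α) = P.root m := by
  induction L with
  | nil => exact ⟨α, rfl⟩
  | cons i L ih =>
      obtain ⟨m, hm⟩ := ih
      refine ⟨P.reflectionPerm i m, ?_⟩
      rw [prodS_cons]
      show P.reflection i (prodS P L (P.root α)) = _
      rw [hm, P.root_reflectionPerm]

lemma rootForm_prodS_invariant (L : List ι) (x y : V) :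
    P.RootForm (prodS P L x) (prodS P L y) = P.RootForm x y := by
  induction L with
  | nil => rfl
  | cons i L ih =>
      rw [prodS_cons]
      show P.RootForm (P.reflection i (prodS P L x)) (P.reflection i (prodS P L y)) = _
      rw [P.rootForm_reflection_reflection_apply, ih]

/-- conjugation of a reflection by a single reflection -/
lemma reflection_conj (i k : ι) :
    P.reflection i * P.reflection k * (P.reflection i)⁻¹
      = P.reflection (P.reflectionPerm i k) := by
  rw [P.reflection_inv]
  ext x
  show P.reflection i (P.reflection k (P.reflection i x)) = _
  rw [P.reflection_apply (P.reflectionPerm i k) x]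
  rw [show P.coroot' (P.reflectionPerm i k) x = P.coroot' k (P.reflection i x) from
    (P.coroot'_reflection x).symm]
  rw [P.root_reflectionPerm i k]
  rw [P.reflection_apply k (P.reflection i x), map_sub, map_smul, P.reflection_same]

lemma prodS_conj (L : List ι) (α : ι) :
    ∃ m, P.root m = prodS P L (P.root α) ∧
      prodS P L * P.reflection α * (prodS P L)⁻¹ = P.reflection m := by
  induction L with
  | nil => exact ⟨α, rfl, by simp⟩
  | cons i L ih =>
      obtain ⟨m, h1, h2⟩ := ih
      refine ⟨P.reflectionPerm i m, ?_, ?_⟩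
      · rw [prodS_cons, P.root_reflectionPerm]
        show P.reflection i (P.root m) = P.reflection i (prodS P L (P.root α))
        rw [h1]
      · rw [prodS_cons, mul_inv_rev]
        rw [show P.reflection i * prodS P L * P.reflection α
              * ((prodS P L)⁻¹ * (P.reflection i)⁻¹)
            = P.reflection i * (prodS P L * P.reflection α * (prodS P L)⁻¹)
              * (P.reflection i)⁻¹ by group]
        rw [h2, reflection_conj]

/-- The exchange-style lemma: if a word sends the simple root `α` to a negative root,
then multiplying by `s_α` shortens the word. -/
lemma exchange (hb : P.IsBaseSet b) (hred : P.IsReduced) :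
    ∀ (L : List ι), (∀ i ∈ L, i ∈ b) → ∀ α, α ∈ b →
    (∃ m, prodS P L (P.root α) = P.root m ∧ NegR P b m) →
    ∃ L' : List ι, (∀ i ∈ L', i ∈ b) ∧ L'.length + 1 = L.length ∧
      prodS P L * P.reflection α = prodS P L' := by
  intro L
  induction L with
  | nil =>
      rintro - α hα ⟨m, hm, hmneg⟩
      rw [prodS_nil] at hm
      have : m = α := P.root.injective (by simpa using hm.symm)
      exact absurd (not_posR_and_negR hb (posR_base hα) (this ▸ hmneg)) (by simp)
  | cons i L ih =>
      rintro hiL α hα ⟨m, hm, hmneg⟩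
      have hi : i ∈ b := hiL i (by simp)
      have hL : ∀ j ∈ L, j ∈ b := fun j hj => hiL j (by simp [hj])
      obtain ⟨m', hm'⟩ := prodS_root (P := P) L α
      rcases posR_or_negR hb m' with hpos | hneg
      · -- u (root α) positive; must have m' = i
        have hsm : P.reflection i (P.root m') = P.root m := by
          rw [← hm, prodS_cons, ← hm']; rfl
        have hperm : P.reflectionPerm i m' = m :=
          P.root.injective (by rw [P.root_reflectionPerm]; exact hsm)
        have hm'i : m' = i := by
          by_contra hne
          exact not_posR_and_negR hb
            (hperm ▸ posR_reflection hb hred hi hpos hne) hmneg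
        obtain ⟨m₁, h1, h2⟩ := prodS_conj (P := P) L α
        have hm₁ : m₁ = i := P.root.injective (by rw [h1, hm', hm'i])
        have hswap : prodS P L * P.reflection α = P.reflection i * prodS P L := by
          have := h2
          rw [hm₁] at this
          calc prodS P L * P.reflection α
              = prodS P L * P.reflection α * (prodS P L)⁻¹ * prodS P L := by group
            _ = P.reflection i * prodS P L := by rw [this]
        refine ⟨L, hL, by simp, ?_⟩
        rw [prodS_cons, mul_assoc, hswap, ← mul_assoc]
        have : P.reflection i * P.reflection i = 1 := by
          rw [← sq, P.reflection_sq]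
        rw [this, one_mul]
      · -- u (root α) negative; use induction hypothesis
        obtain ⟨L', h1, h2, h3⟩ := ih hL α hα ⟨m', hm', hneg⟩
        refine ⟨i :: L', fun j hj => ?_, by simp [← h2], ?_⟩
        · rcases List.mem_cons.mp hj with h | h
          · exact h ▸ hi
          · exact h1 j h
        · rw [prodS_cons, mul_assoc, h3, prodS_cons]

/-- Regularity: an element of the Weyl group fixing a strictly dominant vector is trivial. -/
lemma regular (hb : P.IsBaseSet b) (hred : P.IsReduced) {γ : V}
    (hγ : ∀ j ∈ b, 0 < P.RootForm γ (P.root j))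
    (hposB : ∀ m, PosR P b m → 0 < P.RootForm γ (P.root m))
    (hnegB : ∀ m, NegR P b m → P.RootForm γ (P.root m) < 0)
    {w : V ≃ₗ[ℝ] V}
    (hw : w ∈ Subgroup.closure {x : V ≃ₗ[ℝ] V | ∃ i ∈ b, x = P.reflection i})
    (hfix : w γ = γ) : w = 1 := by
  classical
  by_contra hw1
  obtain ⟨L0, hL0, rfl⟩ := mem_closure_iff_prodS.mp hw
  have hex : ∃ n, ∃ L : List ι, (∀ i ∈ L, i ∈ b) ∧ L.length = n ∧ prodS P L0 = prodS P L :=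
    ⟨L0.length, L0, hL0, rfl, rfl⟩
  obtain ⟨L, hL, hlen, hwL⟩ := Nat.find_spec hex
  set n₀ := Nat.find hex with hn₀
  have hLne : L ≠ [] := by
    rintro rfl
    exact hw1 (by rw [hwL, prodS_nil])
  set α := L.getLast hLne with hαdef
  set L₁ := L.dropLast with hL₁def
  have hsplit : L₁ ++ [α] = L := List.dropLast_append_getLast hLne
  have hα : α ∈ b := hL α (by rw [← hsplit]; simp)
  have hL₁ : ∀ i ∈ L₁, i ∈ b := fun i hi => hL i (by rw [← hsplit]; simp [hi])
  have hwdec : prodS P L = prodS P L₁ * P.reflection α := by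
    conv_lhs => rw [← hsplit]
    rw [prodS_append]
    have : prodS P [α] = P.reflection α := by simp [prodS]
    rw [this]
  -- w (root α) is a root
  obtain ⟨m, hm⟩ := prodS_root (P := P) L α
  rcases posR_or_negR hb m with hpos | hneg
  · -- exchange gives a shorter word
    have hu : prodS P L₁ (P.root α) = P.root (P.reflectionPerm m m) := by
      have h1 : prodS P L₁ = prodS P L * P.reflection α := by
        rw [hwdec, mul_assoc]
        have : P.reflection α * P.reflection α = 1 := by rw [← sq, P.reflection_sq]
        rw [this, mul_one]
      rw [h1]
      show prodS P L (P.reflection α (P.root α)) = _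
      rw [P.reflection_apply_self, map_neg, hm, P.root_reflectionPerm,
        P.reflection_apply_self]
    obtain ⟨L', h1, h2, h3⟩ := exchange hb hred L₁ hL₁ α hα
      ⟨P.reflectionPerm m m, hu, negR_of_posR hb hpos⟩
    have hlenL₁ : L₁.length + 1 = L.length := by
      rw [← hsplit]; simp
    have hshort : L'.length < n₀ := by omega
    exact absurd ⟨L', h1, rfl, by rw [hwL, hwdec, h3]⟩ (Nat.find_min hex hshort)
  · -- contradiction with dominance
    have hBpos : 0 < P.RootForm γ (P.root α) := hposB α (posR_base hα)
    have hBneg : P.RootForm γ (P.root m) < 0 := hnegB m hneg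
    have : P.RootForm γ (P.root α) = P.RootForm γ (P.root m) := by
      conv_lhs => rw [← rootForm_prodS_invariant L γ (P.root α)]
      rw [hm]
      congr 1
      rw [← hwL, hfix]
    linarith

/-- the key identity `2 B(x, αⱼ) = ⟨x, αⱼ∨⟩ B(αⱼ, αⱼ)` -/
lemma two_mul_rootForm (x : V) (j : ι) :
    2 * P.RootForm x (P.root j)
      = P.toLinearMap x (P.coroot j) * P.RootForm (P.root j) (P.root j) := by
  have key := P.rootForm_reflection_reflection_apply j x (P.root j)
  rw [P.reflection_apply_self, P.reflection_apply j x] at key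
  simp only [map_sub, map_neg, map_smul, LinearMap.neg_apply, LinearMap.sub_apply,
    LinearMap.smul_apply, smul_eq_mul] at key
  have hc : P.coroot' j x = P.toLinearMap x (P.coroot j) :=
    rfl
  rw [hc] at key
  linarith

/-- positivity of the pairing of a dominant vector with a positive root -/
lemma rootForm_pos_of_posR {γ : V} (hγ : ∀ j ∈ b, 0 < P.toLinearMap γ (P.coroot j))
    {m : ι} (hm : PosR P b m) : 0 < P.RootForm γ (P.root m) := by
  obtain ⟨c, hc, hcs⟩ := hm
  have hexp : P.RootForm γ (P.root m) = ∑ j ∈ b, (c j : ℝ) * P.RootForm γ (P.root j) := by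
    rw [hcs, int_sum_cast, map_sum]
    exact Finset.sum_congr rfl fun j _ => by rw [map_smul, smul_eq_mul]
  have hpos : ∀ j ∈ b, 0 < P.RootForm γ (P.root j) := by
    intro j hj
    have h1 := two_mul_rootForm (P := P) γ j
    have h2 := P.rootForm_root_self_pos j
    have h3 := hγ j hj
    nlinarith
  have hne : ∃ j ∈ b, c j ≠ 0 := by
    by_contra hz
    push_neg at hz
    have : P.root m = 0 := by
      rw [hcs]
      exact Finset.sum_eq_zero fun j hj => by rw [hz j hj, zero_smul]
    exact P.ne_zero m this
  obtain ⟨j0, hj0, hcj0⟩ := hne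
  rw [hexp]
  apply Finset.sum_pos' (fun j hj => mul_nonneg (by exact_mod_cast hc j hj) (hpos j hj).le)
  refine ⟨j0, hj0, mul_pos ?_ (hpos j0 hj0)⟩
  have := hc j0 hj0
  have : (0:ℝ) < c j0 := by exact_mod_cast lt_of_le_of_ne this (Ne.symm hcj0)
  exact this

lemma rootForm_neg_of_negR (hb : P.IsBaseSet b) {γ : V}
    (hγ : ∀ j ∈ b, 0 < P.toLinearMap γ (P.coroot j))
    {m : ι} (hm : NegR P b m) : P.RootForm γ (P.root m) < 0 := by
  obtain ⟨c, hc, hcs⟩ := hm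
  have : PosR P b (P.reflectionPerm m m) := by
    refine ⟨fun j => -c j, fun j hj => by simpa using hc j hj, ?_⟩
    have h0 : P.root (P.reflectionPerm m m) = -P.root m := by
      rw [P.root_reflectionPerm m m, P.reflection_apply_self]
    rw [h0, hcs, ← Finset.sum_neg_distrib]
    exact Finset.sum_congr rfl fun j _ => by rw [neg_smul]
  have hpos := rootForm_pos_of_posR hγ this
  rw [P.root_reflectionPerm m m, P.reflection_apply_self, map_neg] at hpos
  linarith

/-- linear independence of two distinct base roots as coefficients statement -/
lemma base_pair_indep (hb : P.IsBaseSet b) {i j : ι} (hi : i ∈ b) (hj : j ∈ b) (hij : i ≠ j)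
    (a a' : ℝ) (h : a • P.root i + a' • P.root j = 0) : a = 0 ∧ a' = 0 := by
  have hsum : ∑ k ∈ b, ((if k = i then a else 0) + if k = j then a' else 0) • P.root k
      = ∑ k ∈ b, (0:ℝ) • P.root k := by
    simp only [add_smul]
    rw [Finset.sum_add_distrib]
    rw [show ∑ k ∈ b, (if k = i then a else 0) • P.root k
        = ∑ k ∈ b, (if k = i then a • P.root k else 0) from
      Finset.sum_congr rfl fun k _ => by split <;> simp]
    rw [show ∑ k ∈ b, (if k = j then a' else 0) • P.root k
        = ∑ k ∈ b, (if k = j then a' • P.root k else 0) from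
      Finset.sum_congr rfl fun k _ => by split <;> simp]
    rw [Finset.sum_ite_eq' b i, Finset.sum_ite_eq' b j, if_pos hi, if_pos hj, h]
    simp
  have := coeff_unique hb.1 hsum
  constructor
  · have h1 := this i hi
    rw [if_pos rfl, if_neg hij] at h1
    simpa using h1
  · have h1 := this j hj
    rw [if_neg (Ne.symm hij), if_pos rfl] at h1
    simpa using h1

/-- Strict Cauchy-Schwarz for two distinct base roots. -/
lemma rootForm_sq_lt (hb : P.IsBaseSet b) {i j : ι} (hi : i ∈ b) (hj : j ∈ b) (hij : i ≠ j) :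
    P.RootForm (P.root i) (P.root j) * P.RootForm (P.root i) (P.root j)
      < P.RootForm (P.root i) (P.root i) * P.RootForm (P.root j) (P.root j) := by
  set x := P.root i
  set y := P.root j
  have hyy : 0 < P.RootForm y y := P.rootForm_root_self_pos j
  set t : ℝ := P.RootForm x y / P.RootForm y y with ht
  have hz : x - t • y ≠ 0 := by
    intro h0
    have : (1:ℝ) • x + (-t) • y = 0 := by
      rw [one_smul, neg_smul, ← sub_eq_add_neg, h0]
    exact one_ne_zero (base_pair_indep hb hi hj hij 1 (-t) this).1
  have hmem : x - t • y ∈ P.rootSpan ℝ := by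
    apply Submodule.sub_mem
    · exact Submodule.subset_span (Set.mem_range_self i)
    · exact Submodule.smul_mem _ _ (Submodule.subset_span (Set.mem_range_self j))
  have hpos := P.rootForm_pos_of_ne_zero hmem hz
  have hsymm : P.RootForm y x = P.RootForm x y := by
    simp [rootForm_apply_apply, mul_comm]
  have hexp : P.RootForm (x - t • y) (x - t • y)
      = P.RootForm x x - 2 * t * P.RootForm x y + t * t * P.RootForm y y := by
    simp only [map_sub, map_smul, LinearMap.sub_apply, LinearMap.smul_apply,
      smul_eq_mul, hsymm]
    ring
  rw [hexp, ht] at hpos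
  have h4 : P.RootForm x x - P.RootForm x y * P.RootForm x y / P.RootForm y y > 0 := by
    field_simp at hpos ⊢
    nlinarith [hpos]
  have := mul_pos h4 hyy
  field_simp at this
  nlinarith [this]

/-- Distinct base roots pair non-positively. -/
lemma pairing_nonpos (hb : P.IsBaseSet b) (hcrys : P.IsCrystallographic) (hred : P.IsReduced)
    {i j : ι} (hi : i ∈ b) (hj : j ∈ b) (hij : i ≠ j) : P.pairing i j ≤ 0 := by
  by_contra hpos
  push_neg at hpos
  have hq : 0 < P.pairing j i := by
    have h1 : P.pairing j i * P.RootForm (P.root i) (P.root i)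
        = P.pairing i j * P.RootForm (P.root j) (P.root j) :=
      P.toInvariantForm.pairing_mul_eq_pairing_mul_swap i j
    have := P.rootForm_root_self_pos i
    have := P.rootForm_root_self_pos j
    nlinarith
  obtain ⟨zp, hzp⟩ : ∃ z : ℤ, (z : ℝ) = P.pairing i j := by
    obtain ⟨z, hz⟩ := RootPairing.IsValuedIn.exists_value (self := hcrys) i j
    exact ⟨z, by simpa using hz⟩
  obtain ⟨zq, hzq⟩ : ∃ z : ℤ, (z : ℝ) = P.pairing j i := by
    obtain ⟨z, hz⟩ := RootPairing.IsValuedIn.exists_value (self := hcrys) j i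
    exact ⟨z, by simpa using hz⟩
  have hzp1 : 1 ≤ zp := by
    have h0 : (0:ℝ) < zp := hzp ▸ hpos
    have : (0:ℤ) < zp := by exact_mod_cast h0
    omega
  have hzq1 : 1 ≤ zq := by
    have h0 : (0:ℝ) < zq := hzq ▸ hq
    have : (0:ℤ) < zq := by exact_mod_cast h0
    omega
  -- 4 B(ri,rj)² = p q B(ii) B(jj) < 4 B(ii)B(jj) so pq < 4
  have h2a : 2 * P.RootForm (P.root i) (P.root j)
      = P.pairing i j * P.RootForm (P.root j) (P.root j) :=
    P.toInvariantForm.two_mul_apply_root_root i j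
  have h2b : 2 * P.RootForm (P.root j) (P.root i)
      = P.pairing j i * P.RootForm (P.root i) (P.root i) :=
    P.toInvariantForm.two_mul_apply_root_root j i
  have hsymm : P.RootForm (P.root j) (P.root i) = P.RootForm (P.root i) (P.root j) := by
    simp [rootForm_apply_apply, mul_comm]
  have hii := P.rootForm_root_self_pos i
  have hjj := P.rootForm_root_self_pos j
  have hcs := rootForm_sq_lt hb hi hj hij
  have e1 : (2 * (P.RootForm (P.root i)) (P.root j)) * (2 * (P.RootForm (P.root j)) (P.root i))
      = (P.pairing i j * (P.RootForm (P.root j)) (P.root j))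
        * (P.pairing j i * (P.RootForm (P.root i)) (P.root i)) := by rw [h2a, h2b]
  rw [hsymm] at e1
  have hpq4 : P.pairing i j * P.pairing j i < 4 := by
    by_contra hge
    push_neg at hge
    nlinarith [mul_pos hii hjj, hcs, e1,
      mul_nonneg (by linarith : (0:ℝ) ≤ P.pairing i j * P.pairing j i - 4)
        (le_of_lt (mul_pos hii hjj))]
  have hzpq : zp * zq < 4 := by
    have : (zp : ℝ) * zq < 4 := by rw [hzp, hzq]; exact_mod_cast hpq4
    exact_mod_cast this
  have hone : zp = 1 ∨ zq = 1 := by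
    by_contra hcon
    push_neg at hcon
    have h1 : 2 ≤ zp := by omega
    have h2 : 2 ≤ zq := by omega
    nlinarith
  -- in either case, ± (root i - root j) is a root
  have hroot : ∃ m, P.root m = P.root i - P.root j ∨ P.root m = P.root j - P.root i := by
    rcases hone with h | h
    · -- pairing i j = 1 : reflection j (root i) = root i - root j
      refine ⟨P.reflectionPerm j i, Or.inl ?_⟩
      rw [P.root_reflectionPerm, P.reflection_apply_root, ← hzp, h]
      norm_num
    · refine ⟨P.reflectionPerm i j, Or.inr ?_⟩
      rw [P.root_reflectionPerm, P.reflection_apply_root, ← hzq, h]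
      norm_num
  obtain ⟨m, hm⟩ := hroot
  have hcoeff : ∃ s t : ℝ, P.root m = s • P.root i + t • P.root j ∧
      ((s = 1 ∧ t = -1) ∨ (s = -1 ∧ t = 1)) := by
    rcases hm with h | h
    · exact ⟨1, -1, by rw [h]; module, Or.inl ⟨rfl, rfl⟩⟩
    · exact ⟨-1, 1, by rw [h]; module, Or.inr ⟨rfl, rfl⟩⟩
  obtain ⟨s, t, hst, hsigns⟩ := hcoeff
  -- write as a sum over b
  have hsum : P.root m = ∑ k ∈ b, ((if k = i then s else 0) + if k = j then t else 0)
      • P.root k := by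
    simp only [add_smul]
    rw [Finset.sum_add_distrib]
    rw [show ∑ k ∈ b, (if k = i then s else 0) • P.root k
        = ∑ k ∈ b, (if k = i then s • P.root k else 0) from
      Finset.sum_congr rfl fun k _ => by split <;> simp]
    rw [show ∑ k ∈ b, (if k = j then t else 0) • P.root k
        = ∑ k ∈ b, (if k = j then t • P.root k else 0) from
      Finset.sum_congr rfl fun k _ => by split <;> simp]
    rw [Finset.sum_ite_eq' b i, Finset.sum_ite_eq' b j, if_pos hi, if_pos hj, hst]
  rcases posR_or_negR hb m with hP | hN
  · obtain ⟨c, hc, hcs⟩ := hP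
    have := coeff_unique hb.1 (by rw [← int_sum_cast, ← hcs, hsum] :
      ∑ k ∈ b, ((c k : ℝ)) • P.root k
        = ∑ k ∈ b, ((if k = i then s else 0) + if k = j then t else 0) • P.root k)
    rcases hsigns with ⟨hs, ht⟩ | ⟨hs, ht⟩
    · have h1 := this j hj
      rw [if_neg (Ne.symm hij), if_pos rfl, ht] at h1
      have h2 := hc j hj
      have : (0:ℝ) ≤ c j := by exact_mod_cast h2
      simp at h1
      linarith
    · have h1 := this i hi
      rw [if_pos rfl, if_neg hij, hs] at h1
      have h2 := hc i hi
      have : (0:ℝ) ≤ c i := by exact_mod_cast h2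
      simp at h1
      linarith
  · obtain ⟨c, hc, hcs⟩ := hN
    have := coeff_unique hb.1 (by rw [← int_sum_cast, ← hcs, hsum] :
      ∑ k ∈ b, ((c k : ℝ)) • P.root k
        = ∑ k ∈ b, ((if k = i then s else 0) + if k = j then t else 0) • P.root k)
    rcases hsigns with ⟨hs, ht⟩ | ⟨hs, ht⟩
    · have h1 := this i hi
      rw [if_pos rfl, if_neg hij, hs] at h1
      have h2 := hc i hi
      have : (c i : ℝ) ≤ 0 := by exact_mod_cast h2
      simp at h1
      linarith
    · have h1 := this j hj
      rw [if_neg (Ne.symm hij), if_pos rfl, ht] at h1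
      have h2 := hc j hj
      have : (c j : ℝ) ≤ 0 := by exact_mod_cast h2
      simp at h1
      linarith

/-- action of a product of pairwise-orthogonal simple reflections -/
lemma noncommProd_reflection_apply :
    ∀ (K : Finset ι) (horth : ∀ j ∈ K, ∀ k ∈ K, j ≠ k → P.pairing j k = 0)
    (hcomm : (K : Set ι).Pairwise fun i j => Commute (P.reflection i) (P.reflection j)) (x : V),
    (K.noncommProd (fun i => P.reflection i) hcomm) x
      = x - ∑ j ∈ K, (P.toLinearMap x (P.coroot j)) • P.root j := by
  intro K
  induction K using Finset.induction_on with
  | empty => intro _ _ x; simp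
  | @insert i K hiK ih =>
      intro horth hcomm x
      rw [Finset.noncommProd_insert_of_notMem K i _ _ hiK]
      have horth' : ∀ j ∈ K, ∀ k ∈ K, j ≠ k → P.pairing j k = 0 := fun j hj k hk h =>
        horth j (Finset.mem_insert_of_mem hj) k (Finset.mem_insert_of_mem hk) h
      show P.reflection i ((K.noncommProd (fun i => P.reflection i) _) x) = _
      rw [ih horth' _ x]
      have hzero : P.coroot' i (∑ j ∈ K, (P.toLinearMap x) (P.coroot j) • P.root j)
          = 0 := by
        rw [map_sum]
        apply Finset.sum_eq_zero
        intro j hj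
        have hji : j ≠ i := fun h => hiK (h ▸ hj)
        have hpair : P.pairing j i = 0 := horth j (Finset.mem_insert_of_mem hj) i
          (Finset.mem_insert_self i K) hji
        rw [map_smul, smul_eq_mul, P.root_coroot'_eq_pairing, hpair, mul_zero]
      rw [P.reflection_apply]
      have hred : P.coroot' i (x - ∑ j ∈ K, (P.toLinearMap x) (P.coroot j) • P.root j)
          = P.toLinearMap x (P.coroot i) := by
        rw [map_sub, hzero, sub_zero]
        exact rfl
      rw [hred, Finset.sum_insert hiK]
      abel


end ExistsCoeffAux
/-- **A strict coefficient for `w` not a product of commuting simple reflections.**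
Let `w ≠ 1` be an element of the Weyl group which is not a product `∏_{α ∈ K} s_α` over a
nonempty totally disconnected subset `K ⊆ Π`.  Writing `γ − wγ = Σ_{α ∈ Π} c_α(w)·α`, there
exists `β ∈ Π` with `c_β(w) > ⟨γ, β∨⟩`. -/
theorem exists_coeff_gt_pairing
    {ι V N : Type*} [Fintype ι] [DecidableEq ι] [AddCommGroup V] [Module ℝ V]
    [FiniteDimensional ℝ V] [AddCommGroup N] [Module ℝ N]
    (P : RootSystem ι ℝ V N) (hcrys : P.IsCrystallographic) (hred : P.IsReduced)
    (b : Finset ι) (hb : P.IsBaseSet b)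
    (γ : V) (hγ : ∀ j ∈ b, ∃ z : ℤ, 0 < z ∧ (z : ℝ) = P.toLinearMap γ (P.coroot j))
    (w : V ≃ₗ[ℝ] V)
    (hw : w ∈ Subgroup.closure {x : V ≃ₗ[ℝ] V | ∃ i ∈ b, x = P.reflection i})
    (hw1 : w ≠ 1)
    (hwK : ¬ ∃ (K : Finset ι)
      (hcomm : (K : Set ι).Pairwise fun i j => Commute (P.reflection i) (P.reflection j)),
        K.Nonempty ∧ K ⊆ b ∧ (∀ i ∈ K, ∀ j ∈ K, i ≠ j → P.pairing i j = 0) ∧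
        w = K.noncommProd (fun i => P.reflection i) hcomm)
    (c : ι → ℕ) (hc : γ - w γ = ∑ j ∈ b, (c j : ℝ) • P.root j) :
    ∃ j ∈ b, P.toLinearMap γ (P.coroot j) < (c j : ℝ) := by
  classical
  by_contra hcon
  push_neg at hcon
  have hγpos : ∀ j ∈ b, 0 < P.toLinearMap γ (P.coroot j) := fun j hj => by
    obtain ⟨z, hz0, hz⟩ := hγ j hj
    rw [← hz]
    exact_mod_cast hz0
  set B := P.RootForm with hB
  have hsymm : ∀ x y : V, B x y = B y x := fun x y => by
    simp [hB, rootForm_apply_apply, mul_comm]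
  obtain ⟨L, hL, hwL⟩ := ExistsCoeffAux.mem_closure_iff_prodS.mp hw
  have hinv : B (w γ) (w γ) = B γ γ := by
    rw [hwL]; exact ExistsCoeffAux.rootForm_prodS_invariant L γ γ
  have heq : B (γ - w γ) (γ - w γ) = 2 * B γ (γ - w γ) := by
    have e1 : B (γ - w γ) (γ - w γ)
        = B γ γ - B γ (w γ) - B (w γ) γ + B (w γ) (w γ) := by
      simp only [map_sub, LinearMap.sub_apply]
      ring
    have e2 : B γ (γ - w γ) = B γ γ - B γ (w γ) := by
      simp only [map_sub]
    rw [e1, e2, hinv, hsymm (w γ) γ]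
    ring
  have hexp1 : B (γ - w γ) (γ - w γ)
      = ∑ j ∈ b, ∑ k ∈ b, (c j : ℝ) * ((c k : ℝ) * B (P.root j) (P.root k)) := by
    rw [hc, map_sum B _ b, LinearMap.sum_apply]
    refine Finset.sum_congr rfl fun j hj => ?_
    rw [map_smul, LinearMap.smul_apply, smul_eq_mul, map_sum, Finset.mul_sum]
    refine Finset.sum_congr rfl fun k hk => ?_
    rw [map_smul, smul_eq_mul]
  have hexp2 : B γ (γ - w γ) = ∑ j ∈ b, (c j : ℝ) * B γ (P.root j) := by
    rw [hc, map_sum]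
    exact Finset.sum_congr rfl fun j hj => by rw [map_smul, smul_eq_mul]
  have hkey : ∀ j, 2 * B γ (P.root j)
      = P.toLinearMap γ (P.coroot j) * B (P.root j) (P.root j) :=
    fun j => ExistsCoeffAux.two_mul_rootForm γ j
  -- the two sums
  have hmain : ∑ j ∈ b, (c j : ℝ) * ((P.toLinearMap γ (P.coroot j) - (c j : ℝ))
        * B (P.root j) (P.root j))
      = ∑ j ∈ b, ∑ k ∈ b.erase j, (c j : ℝ) * ((c k : ℝ) * B (P.root j) (P.root k)) := by
    have e3 : ∑ j ∈ b, ∑ k ∈ b, (c j : ℝ) * ((c k : ℝ) * B (P.root j) (P.root k))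
        = ∑ j ∈ b, (c j : ℝ) * (P.toLinearMap γ (P.coroot j) * B (P.root j) (P.root j)) := by
      rw [← hexp1, heq, hexp2, Finset.mul_sum]
      exact Finset.sum_congr rfl fun j hj => by
        rw [← mul_assoc, mul_comm 2 ((c j : ℝ)), mul_assoc, hkey j]
    have e4 : ∑ j ∈ b, ∑ k ∈ b, (c j : ℝ) * ((c k : ℝ) * B (P.root j) (P.root k))
        = ∑ j ∈ b, (c j : ℝ) * ((c j : ℝ) * B (P.root j) (P.root j))
          + ∑ j ∈ b, ∑ k ∈ b.erase j, (c j : ℝ) * ((c k : ℝ) * B (P.root j) (P.root k)) := by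
      rw [← Finset.sum_add_distrib]
      exact Finset.sum_congr rfl fun j hj =>
        (Finset.add_sum_erase b _ hj).symm
    have e5 : ∑ j ∈ b, (c j : ℝ) * ((P.toLinearMap γ (P.coroot j) - (c j : ℝ))
          * B (P.root j) (P.root j))
        = ∑ j ∈ b, ((c j : ℝ) * (P.toLinearMap γ (P.coroot j) * B (P.root j) (P.root j))
            - (c j : ℝ) * ((c j : ℝ) * B (P.root j) (P.root j))) :=
      Finset.sum_congr rfl fun j _ => by ring
    rw [e5, Finset.sum_sub_distrib, ← e3, e4]
    ring
  -- sign analysis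
  have hT_nonneg : ∀ j ∈ b, 0 ≤ (c j : ℝ) * ((P.toLinearMap γ (P.coroot j) - (c j : ℝ))
      * B (P.root j) (P.root j)) := by
    intro j hj
    apply mul_nonneg (by positivity)
    apply mul_nonneg (by linarith [hcon j hj])
    exact (P.rootForm_root_self_pos j).le
  have hBjk_nonpos : ∀ j ∈ b, ∀ k ∈ b, j ≠ k → B (P.root j) (P.root k) ≤ 0 := by
    intro j hj k hk hjk
    have hp := ExistsCoeffAux.pairing_nonpos hb hcrys hred hj hk hjk
    have h2 : 2 * P.RootForm (P.root j) (P.root k)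
        = P.pairing j k * P.RootForm (P.root k) (P.root k) :=
      P.toInvariantForm.two_mul_apply_root_root j k
    have h3 := P.rootForm_root_self_pos k
    nlinarith
  have hU_nonpos : ∀ j ∈ b, ∀ k ∈ b.erase j,
      (c j : ℝ) * ((c k : ℝ) * B (P.root j) (P.root k)) ≤ 0 := by
    intro j hj k hk
    have hkb := Finset.mem_of_mem_erase hk
    have hkj : k ≠ j := Finset.ne_of_mem_erase hk
    have := hBjk_nonpos j hj k hkb (Ne.symm hkj)
    have h1 : (0:ℝ) ≤ (c j : ℝ) := by positivity
    have h2 : (0:ℝ) ≤ (c k : ℝ) := by positivity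
    exact mul_nonpos_of_nonneg_of_nonpos h1
      (mul_nonpos_of_nonneg_of_nonpos h2 this)
  have hT_zero : ∀ j ∈ b, (c j : ℝ) * ((P.toLinearMap γ (P.coroot j) - (c j : ℝ))
      * B (P.root j) (P.root j)) = 0 := by
    rw [← Finset.sum_eq_zero_iff_of_nonneg hT_nonneg]
    have h1 : 0 ≤ ∑ j ∈ b, (c j : ℝ) * ((P.toLinearMap γ (P.coroot j) - (c j : ℝ))
        * B (P.root j) (P.root j)) := Finset.sum_nonneg hT_nonneg
    have h2 : ∑ j ∈ b, ∑ k ∈ b.erase j, (c j : ℝ) * ((c k : ℝ) * B (P.root j) (P.root k))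
        ≤ 0 := Finset.sum_nonpos fun j hj => Finset.sum_nonpos fun k hk => hU_nonpos j hj k hk
    linarith [hmain]
  have hU_zero : ∀ j ∈ b, ∀ k ∈ b.erase j,
      (c j : ℝ) * ((c k : ℝ) * B (P.root j) (P.root k)) = 0 := by
    have hsum0 : ∑ j ∈ b, ∑ k ∈ b.erase j, (c j : ℝ) * ((c k : ℝ) * B (P.root j) (P.root k))
        = 0 := by
      rw [← hmain]
      exact Finset.sum_eq_zero hT_zero
    intro j hj k hk
    have houter : ∀ j ∈ b, ∑ k ∈ b.erase j, (c j : ℝ) * ((c k : ℝ) * B (P.root j) (P.root k))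
        = 0 := by
      intro j hj
      have := Finset.sum_eq_zero_iff_of_nonpos (fun j hj => Finset.sum_nonpos
        fun k hk => hU_nonpos j hj k hk) |>.mp hsum0
      exact this j hj
    have := Finset.sum_eq_zero_iff_of_nonpos (fun k hk => hU_nonpos j hj k hk) |>.mp
      (houter j hj)
    exact this k hk
  -- conclusions from the zero sums
  have hdichotomy : ∀ j ∈ b, c j = 0 ∨ (c j : ℝ) = P.toLinearMap γ (P.coroot j) := by
    intro j hj
    rcases mul_eq_zero.mp (hT_zero j hj) with h | h
    · left; exact_mod_cast h
    · rcases mul_eq_zero.mp h with h' | h'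
      · right; linarith
      · exact absurd h' (P.rootForm_root_self_pos j).ne'
  set K : Finset ι := b.filter (fun j => c j ≠ 0) with hK
  have hKb : K ⊆ b := Finset.filter_subset _ b
  have horth : ∀ i ∈ K, ∀ j ∈ K, i ≠ j → P.pairing i j = 0 := by
    intro i hi j hj hij
    obtain ⟨hib, hic⟩ := Finset.mem_filter.mp hi
    obtain ⟨hjb, hjc⟩ := Finset.mem_filter.mp hj
    have hjK : j ∈ b.erase i := Finset.mem_erase.mpr ⟨Ne.symm hij, hjb⟩
    have := hU_zero i hib j hjK
    have hci : (c i : ℝ) ≠ 0 := by exact_mod_cast hic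
    have hcj : (c j : ℝ) ≠ 0 := by exact_mod_cast hjc
    have hB0 : B (P.root i) (P.root j) = 0 := by
      rcases mul_eq_zero.mp this with h | h
      · exact absurd h hci
      · rcases mul_eq_zero.mp h with h' | h'
        · exact absurd h' hcj
        · exact h'
    exact (P.toInvariantForm.apply_root_root_zero_iff i j).mp hB0
  have hcommK : (K : Set ι).Pairwise fun i j => Commute (P.reflection i) (P.reflection j) := by
    intro i hi j hj hij
    exact isOrthogonal_comm (P := P.toRootPairing)
      (h := ⟨horth i hi j hj hij, horth j hj i hi (Ne.symm hij)⟩)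
  set u : V ≃ₗ[ℝ] V := K.noncommProd (fun i => P.reflection i) hcommK with hu
  have huγ : u γ = γ - ∑ j ∈ K, (P.toLinearMap γ (P.coroot j)) • P.root j :=
    ExistsCoeffAux.noncommProd_reflection_apply K horth hcommK γ
  have hsums : ∑ j ∈ K, (P.toLinearMap γ (P.coroot j)) • P.root j
      = ∑ j ∈ b, (c j : ℝ) • P.root j := by
    rw [show ∑ j ∈ K, (P.toLinearMap γ (P.coroot j)) • P.root j
        = ∑ j ∈ K, (c j : ℝ) • P.root j from Finset.sum_congr rfl fun j hj => by
      obtain ⟨hjb, hjc⟩ := Finset.mem_filter.mp hj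
      rcases hdichotomy j hjb with h | h
      · exact absurd h hjc
      · rw [← h]]
    apply Finset.sum_subset hKb
    intro x hx hxK
    have : c x = 0 := by
      by_contra h
      exact hxK (Finset.mem_filter.mpr ⟨hx, h⟩)
    rw [this]
    simp
  have huw : u γ = w γ := by
    rw [huγ, hsums, ← hc]
    abel
  have humem : u ∈ Subgroup.closure {x : V ≃ₗ[ℝ] V | ∃ i ∈ b, x = P.reflection i} :=
    Subgroup.noncommProd_mem _ hcommK fun i hi =>
      Subgroup.subset_closure ⟨i, hKb hi, rfl⟩
  have hfix : (w⁻¹ * u) γ = γ := by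
    show w⁻¹ (u γ) = γ
    rw [huw]
    show (w⁻¹ * w) γ = γ
    rw [inv_mul_cancel]
    rfl
  have hregmem : w⁻¹ * u ∈ Subgroup.closure {x : V ≃ₗ[ℝ] V | ∃ i ∈ b, x = P.reflection i} :=
    Subgroup.mul_mem _ (Subgroup.inv_mem _ hw) humem
  have hwu : w⁻¹ * u = 1 := by
    refine ExistsCoeffAux.regular hb hred ?_ ?_ ?_ hregmem hfix
    · intro j hj
      have h1 := hkey j
      have h2 := P.rootForm_root_self_pos j
      have h3 := hγpos j hj
      nlinarith
    · exact fun m hm => ExistsCoeffAux.rootForm_pos_of_posR hγpos hm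
    · exact fun m hm => ExistsCoeffAux.rootForm_neg_of_negR hb hγpos hm
  have hweq : w = u := by
    have := inv_mul_eq_one.mp hwu
    exact this
  have hKne : K.Nonempty := by
    rw [Finset.nonempty_iff_ne_empty]
    intro h
    apply hw1
    rw [hweq]
    refine LinearEquiv.ext fun x => ?_
    rw [show u x = x - ∑ j ∈ K, (P.toLinearMap x (P.coroot j)) • P.root j from
      ExistsCoeffAux.noncommProd_reflection_apply K horth hcommK x, h]
    simp
  exact hwK ⟨K, hcommK, hKne, hKb, horth, hweq⟩
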